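/- For the without-replacement sampling probabilities, the error term converges: if U ∈ ℕ^d with T := ∑_i U_i ≥ m and Z_i := U_i/T, then for every v ∈ Σ_m^{(d)}, |∏_{i=1}^d C(U_i, v_i)/C(T, m) − (m choose v_1,...,v_d) ∏_{i=1}^d Z_i^{v_i}| ≤ M/T for a constant M depending only on m and d (and not on U). -/

import Mathlib

open Finset

/-- The set `Σ_m^{(d)}` of vectors `v ∈ ℕ^d` with `∑ i, v i = m`. -/
def sigmaVec (d m : ℕ) : Finset (Fin d → ℕ) :=
  (Fintype.piFinset fun _ : Fin d => Finset.range (m + 1)).filter (fun v => ∑ i, v i = m)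

private lemma two_choose_le (a b k l : ℕ) :
    a.choose k * b.choose l ≤ (a + b).choose (k + l) := by
  rw [Nat.add_choose_eq]
  exact Finset.single_le_sum (f := fun ij : ℕ × ℕ => a.choose ij.1 * b.choose ij.2)
    (a := (k, l)) (fun _ _ => Nat.zero_le _) (Finset.HasAntidiagonal.mem_antidiagonal.2 rfl)

private lemma prod_choose_le {ι : Type*} (s : Finset ι) (U v : ι → ℕ) :
    ∏ i ∈ s, (U i).choose (v i) ≤ (∑ i ∈ s, U i).choose (∑ i ∈ s, v i) := by
  induction s using Finset.cons_induction with
  | empty => simp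
  | cons a s ha ih =>
    rw [Finset.prod_cons, Finset.sum_cons, Finset.sum_cons]
    exact le_trans (Nat.mul_le_mul (le_refl _) ih) (two_choose_le _ _ _ _)

private lemma prod_sub_prod_le {ι : Type*} (s : Finset ι) (f g : ι → ℝ) (B c : ℝ)
    (hB : 0 ≤ B) (hc : 0 ≤ c)
    (h : ∀ i ∈ s, 0 ≤ g i ∧ g i ≤ f i ∧ f i ≤ B ∧ f i - g i ≤ c) :
    ∏ i ∈ s, f i - ∏ i ∈ s, g i ≤ s.card * c * B ^ (s.card - 1) := by
  induction s using Finset.cons_induction with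
  | empty => simp
  | cons a s ha ih =>
    rw [Finset.prod_cons, Finset.prod_cons, Finset.card_cons]
    obtain ⟨hg0a, hgfa, hfBa, hca⟩ := h a (Finset.mem_cons_self a s)
    have h' : ∀ i ∈ s, 0 ≤ g i ∧ g i ≤ f i ∧ f i ≤ B ∧ f i - g i ≤ c :=
      fun i hi => h i (Finset.mem_cons.2 (Or.inr hi))
    have hPg0 : 0 ≤ ∏ i ∈ s, g i := Finset.prod_nonneg fun i hi => (h' i hi).1
    have hPgPf : ∏ i ∈ s, g i ≤ ∏ i ∈ s, f i :=
      Finset.prod_le_prod (fun i hi => (h' i hi).1) (fun i hi => (h' i hi).2.1)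
    have hPf0 : 0 ≤ ∏ i ∈ s, f i := le_trans hPg0 hPgPf
    have hPfB : ∏ i ∈ s, f i ≤ B ^ s.card := by
      calc ∏ i ∈ s, f i ≤ ∏ _i ∈ s, B :=
            Finset.prod_le_prod (fun i hi => le_trans (h' i hi).1 (h' i hi).2.1)
              (fun i hi => (h' i hi).2.2.1)
        _ = B ^ s.card := by rw [Finset.prod_const]
    have ih' := ih h'
    have key : f a * ∏ i ∈ s, f i - g a * ∏ i ∈ s, g i
        = (f a - g a) * ∏ i ∈ s, f i + g a * (∏ i ∈ s, f i - ∏ i ∈ s, g i) := by ring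
    rw [key]
    have h1 : (f a - g a) * ∏ i ∈ s, f i ≤ c * B ^ s.card :=
      le_trans (mul_le_mul_of_nonneg_right hca hPf0) (mul_le_mul_of_nonneg_left hPfB hc)
    have h2 : g a * (∏ i ∈ s, f i - ∏ i ∈ s, g i) ≤ s.card * c * B ^ s.card := by
      have hb : g a * (∏ i ∈ s, f i - ∏ i ∈ s, g i)
          ≤ B * (s.card * c * B ^ (s.card - 1)) :=
        mul_le_mul (le_trans hgfa hfBa) ih' (sub_nonneg.2 hPgPf) hB
      refine le_trans hb ?_
      rcases Nat.eq_zero_or_pos s.card with h0 | h0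
      · simp [h0]
      · have hn : s.card - 1 + 1 = s.card := Nat.succ_pred_eq_of_pos h0
        have hp : B ^ s.card = B ^ (s.card - 1) * B := by rw [← pow_succ, hn]
        exact le_of_eq (by rw [hp]; ring)
    have hcardcast : ((s.card + 1 : ℕ) : ℝ) = (s.card : ℝ) + 1 := by push_cast; ring
    rw [Nat.add_sub_cancel, hcardcast]
    linarith

theorem hypergeometric_multinomial_bound (m d : ℕ) (hm : 1 ≤ m) (hd : 1 ≤ d) :
    ∃ M : ℝ, ∀ U : Fin d → ℕ, m ≤ ∑ i, U i →
      ∀ v ∈ sigmaVec d m,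
        |(∏ i, (Nat.choose (U i) (v i) : ℝ)) / (Nat.choose (∑ i, U i) m : ℝ)
          - (Nat.multinomial Finset.univ v : ℝ) *
            ∏ i, ((U i : ℝ) / (∑ i, U i : ℕ)) ^ v i|
        ≤ M / (∑ i, U i : ℕ) := by
  refine ⟨(1 + (m.factorial : ℝ)) * m ^ 2, ?_⟩
  intro U hT v hv
  have hsum : ∑ i, v i = m := (Finset.mem_filter.1 hv).2
  set T : ℕ := ∑ i, U i with hTdef
  have hT1 : 1 ≤ T := le_trans hm hT
  have ht0 : (0 : ℝ) < (T : ℝ) := by exact_mod_cast hT1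
  have htne : (T : ℝ) ≠ 0 := ne_of_gt ht0
  -- natural number quantities
  set P : ℕ := ∏ i, (U i).choose (v i) with hPdef
  set Q : ℕ := T.choose m with hQdef
  set A : ℕ := ∏ i, (U i).descFactorial (v i) with hAdef
  set Bn : ℕ := T.descFactorial m with hBndef
  set Cn : ℕ := ∏ i, (U i) ^ (v i) with hCndef
  set Mu : ℕ := Nat.multinomial Finset.univ v with hMudef
  have idA : A = (∏ i, (v i).factorial) * P := by
    rw [hAdef, hPdef, ← Finset.prod_mul_distrib]
    exact Finset.prod_congr rfl fun i _ => Nat.descFactorial_eq_factorial_mul_choose _ _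
  have idB : Bn = m.factorial * Q := Nat.descFactorial_eq_factorial_mul_choose _ _
  have idMu : (∏ i, (v i).factorial) * Mu = m.factorial := by
    rw [hMudef, Nat.multinomial_spec, hsum]
  have hQpos : 0 < Q := Nat.choose_pos hT
  have hBnpos : 0 < Bn := by rw [idB]; positivity
  have hqne : (Q : ℝ) ≠ 0 := by exact_mod_cast Nat.pos_iff_ne_zero.1 hQpos
  have hbne : (Bn : ℝ) ≠ 0 := by exact_mod_cast Nat.pos_iff_ne_zero.1 hBnpos
  have keyN : P * Bn = (Mu * A) * Q := by
    rw [idB, idA, ← idMu]; ring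
  -- Vandermonde: P ≤ Q
  have hPQ : P ≤ Q := by
    have := prod_choose_le (Finset.univ : Finset (Fin d)) U v
    rwa [hsum, ← hTdef] at this
  -- real identity 1
  have e1 : (P : ℝ) / (Q : ℝ) = (Mu : ℝ) * (A : ℝ) / (Bn : ℝ) := by
    rw [div_eq_div_iff hqne hbne]
    exact_mod_cast keyN
  -- real identity 2
  have e2 : ∏ i, ((U i : ℝ) / (T : ℝ)) ^ v i = (Cn : ℝ) / (T : ℝ) ^ m := by
    simp_rw [div_pow]
    rw [Finset.prod_div_distrib, Finset.prod_pow_eq_pow_sum, hsum]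
    congr 1
    rw [hCndef]; push_cast; ring
  -- bounds on each coordinate
  have hUleT : ∀ i : Fin d, U i ≤ T :=
    fun i => Finset.single_le_sum (f := U) (fun _ _ => Nat.zero_le _) (Finset.mem_univ i)
  have hvlem : ∀ i : Fin d, v i ≤ m := by
    intro i
    rw [← hsum]
    exact Finset.single_le_sum (f := v) (fun _ _ => Nat.zero_le _) (Finset.mem_univ i)
  -- telescoping bound for T^m - Bn
  have hIII : (T : ℝ) ^ m - (Bn : ℝ) ≤ (m : ℝ) * m * (T : ℝ) ^ (m - 1) := by
    have := prod_sub_prod_le (Finset.range m) (fun _ => (T : ℝ))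
      (fun j => ((T - j : ℕ) : ℝ)) (T : ℝ) (m : ℝ) (le_of_lt ht0) (by positivity) ?_
    · rw [Finset.prod_const, Finset.card_range] at this
      have hBeq : ((Bn : ℕ) : ℝ) = ∏ j ∈ Finset.range m, ((T - j : ℕ) : ℝ) := by
        rw [hBndef, Nat.descFactorial_eq_prod_range]; push_cast; ring
      rw [← hBeq] at this
      exact this
    · intro j hj
      have hjm : j < m := Finset.mem_range.1 hj
      refine ⟨by positivity, ?_, le_refl _, ?_⟩
      · show ((T - j : ℕ) : ℝ) ≤ (T : ℝ)
        exact_mod_cast Nat.sub_le T j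
      show (T : ℝ) - ((T - j : ℕ) : ℝ) ≤ (m : ℝ)
      have h1 : T ≤ T - j + j := le_tsub_add
      have h2 : (T : ℝ) ≤ ((T - j : ℕ) : ℝ) + j := by exact_mod_cast h1
      have h3 : (j : ℝ) ≤ m := by exact_mod_cast le_of_lt hjm
      linarith
  -- telescoping bound for Cn - A
  have hII : (Cn : ℝ) - (A : ℝ) ≤ (m : ℝ) * m * (T : ℝ) ^ (m - 1) := by
    have := prod_sub_prod_le (Finset.univ.sigma fun i : Fin d => Finset.range (v i))
      (fun p => (U p.1 : ℝ)) (fun p => ((U p.1 - p.2 : ℕ) : ℝ)) (T : ℝ) (m : ℝ)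
      (le_of_lt ht0) (by positivity) ?_
    · rw [Finset.prod_sigma, Finset.prod_sigma, Finset.card_sigma] at this
      have hcard : ∑ i, (Finset.range (v i)).card = m := by
        simp only [Finset.card_range]; exact hsum
      rw [hcard] at this
      have hCeq : ((Cn : ℕ) : ℝ) = ∏ i, ∏ _j ∈ Finset.range (v i), (U i : ℝ) := by
        simp only [Finset.prod_const, Finset.card_range]
        rw [hCndef]; push_cast; ring
      have hAeq : ((A : ℕ) : ℝ) = ∏ i, ∏ j ∈ Finset.range (v i), ((U i - j : ℕ) : ℝ) := by
        rw [hAdef]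
        push_cast [Nat.descFactorial_eq_prod_range]
        ring
      rw [← hCeq, ← hAeq] at this
      exact this
    · rintro ⟨i, j⟩ hp
      have hj : j < v i := Finset.mem_range.1 (Finset.mem_sigma.1 hp).2
      have hjm : j < m := lt_of_lt_of_le hj (hvlem i)
      refine ⟨by positivity, ?_, ?_, ?_⟩
      · show ((U i - j : ℕ) : ℝ) ≤ (U i : ℝ)
        exact_mod_cast Nat.sub_le (U i) j
      · show (U i : ℝ) ≤ (T : ℝ)
        exact_mod_cast hUleT i
      · show (U i : ℝ) - ((U i - j : ℕ) : ℝ) ≤ (m : ℝ)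
        have h1 : U i ≤ U i - j + j := le_tsub_add
        have h2 : (U i : ℝ) ≤ ((U i - j : ℕ) : ℝ) + j := by exact_mod_cast h1
        have h3 : (j : ℝ) ≤ m := by exact_mod_cast le_of_lt hjm
        linarith
  -- other facts
  have hx1 : (Mu : ℝ) * (A : ℝ) / (Bn : ℝ) ≤ 1 := by
    rw [← e1, div_le_one (by exact_mod_cast hQpos)]
    exact_mod_cast hPQ
  have hx0 : 0 ≤ (Mu : ℝ) * (A : ℝ) / (Bn : ℝ) := by positivity
  have hBtm : (Bn : ℝ) ≤ (T : ℝ) ^ m := by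
    exact_mod_cast Nat.descFactorial_le_pow T m
  have hACn : (A : ℝ) ≤ (Cn : ℝ) := by
    have : A ≤ Cn :=
      Finset.prod_le_prod' fun i _ => Nat.descFactorial_le_pow (U i) (v i)
    exact_mod_cast this
  have hmuF : (Mu : ℝ) ≤ (m.factorial : ℝ) := by
    have h1 : 1 ≤ ∏ i, (v i).factorial :=
      Finset.one_le_prod' fun i _ => Nat.one_le_iff_ne_zero.2 (Nat.factorial_ne_zero _)
    have : Mu ≤ m.factorial := by
      calc Mu = 1 * Mu := (one_mul Mu).symm
        _ ≤ (∏ i, (v i).factorial) * Mu := Nat.mul_le_mul_right Mu h1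
        _ = m.factorial := idMu
    exact_mod_cast this
  have hmu0 : (0 : ℝ) ≤ (Mu : ℝ) := Nat.cast_nonneg _
  have htm0 : (0 : ℝ) < (T : ℝ) ^ m := by positivity
  have htm1 : (0 : ℝ) < (T : ℝ) ^ (m - 1) := by positivity
  have htt : (T : ℝ) ^ m = (T : ℝ) ^ (m - 1) * (T : ℝ) := by
    have hmm : m - 1 + 1 = m := by omega
    rw [← pow_succ, hmm]
  -- ratio simplification
  have hq : (m : ℝ) * m * (T : ℝ) ^ (m - 1) / (T : ℝ) ^ m = (m : ℝ) * m / (T : ℝ) := by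
    rw [htt]
    field_simp
  -- rewrite the goal
  have hPcast : (∏ i, ((U i).choose (v i) : ℝ)) = (P : ℝ) := by
    rw [hPdef]; push_cast; ring
  rw [e2, hPcast, e1]
  have decomp : (Mu : ℝ) * (A : ℝ) / (Bn : ℝ) - (Mu : ℝ) * ((Cn : ℝ) / (T : ℝ) ^ m)
      = ((Mu : ℝ) * (A : ℝ) / (Bn : ℝ)) * (((T : ℝ) ^ m - (Bn : ℝ)) / (T : ℝ) ^ m)
        - (Mu : ℝ) * (((Cn : ℝ) - (A : ℝ)) / (T : ℝ) ^ m) := by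
    field_simp
    ring
  rw [decomp]
  set X := ((Mu : ℝ) * (A : ℝ) / (Bn : ℝ)) * (((T : ℝ) ^ m - (Bn : ℝ)) / (T : ℝ) ^ m) with hX
  set Y := (Mu : ℝ) * (((Cn : ℝ) - (A : ℝ)) / (T : ℝ) ^ m) with hY
  have hX0 : 0 ≤ X := by
    apply mul_nonneg hx0
    apply div_nonneg (by linarith) (le_of_lt htm0)
  have hY0 : 0 ≤ Y := by
    apply mul_nonneg hmu0
    apply div_nonneg (by linarith) (le_of_lt htm0)
  have hXb : X ≤ (m : ℝ) * m / (T : ℝ) := by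
    have h3 : ((T : ℝ) ^ m - (Bn : ℝ)) / (T : ℝ) ^ m
        ≤ ((m : ℝ) * m * (T : ℝ) ^ (m - 1)) / (T : ℝ) ^ m :=
      (div_le_div_iff_of_pos_right htm0).2 hIII
    calc X ≤ 1 * (((m : ℝ) * m * (T : ℝ) ^ (m - 1)) / (T : ℝ) ^ m) := by
          apply mul_le_mul hx1 h3 (div_nonneg (by linarith) (le_of_lt htm0)) (by norm_num)
      _ = (m : ℝ) * m / (T : ℝ) := by rw [one_mul, hq]
  have hYb : Y ≤ (m.factorial : ℝ) * ((m : ℝ) * m / (T : ℝ)) := by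
    have h3 : ((Cn : ℝ) - (A : ℝ)) / (T : ℝ) ^ m
        ≤ ((m : ℝ) * m * (T : ℝ) ^ (m - 1)) / (T : ℝ) ^ m :=
      (div_le_div_iff_of_pos_right htm0).2 hII
    calc Y ≤ (m.factorial : ℝ) * (((m : ℝ) * m * (T : ℝ) ^ (m - 1)) / (T : ℝ) ^ m) :=
          mul_le_mul hmuF h3 (div_nonneg (by linarith) (le_of_lt htm0))
            (Nat.cast_nonneg _)
      _ = (m.factorial : ℝ) * ((m : ℝ) * m / (T : ℝ)) := by rw [hq]
  have hMsplit : (1 + (m.factorial : ℝ)) * (m : ℝ) ^ 2 / (T : ℝ)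
      = (m : ℝ) * m / (T : ℝ) + (m.factorial : ℝ) * ((m : ℝ) * m / (T : ℝ)) := by
    field_simp
  rw [abs_le]
  constructor
  · rw [hMsplit]; linarith
  · rw [hMsplit]; linarith
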